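/- arXiv:0710.5787 — 2 statements merged into one kernel-verified Lean document; each statement's English description precedes it below -/
import Mathlib

section
/- Let Γ be a cocompact Kleinian group, let α ∈ comm(Γ) \ Γ, let T ∈ Γα⁻¹Γ, and let T₀ be a loxodromic element of the centralizer C_Γ(T) whose norm N(T₀) is minimal among the norms of all loxodromic elements of C_Γ(T). Then T₀ is primitive in Γ, i.e., there is no S ∈ Γ and integer m ≥ 2 with Sᵐ = T₀. -/
open Matrix Complex Pointwise

/-- `SL(2,ℂ)`. -/
abbrev SL2C := Matrix.SpecialLinearGroup (Fin 2) ℂ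

/-- The topology on `SL(2,ℂ)` induced from the matrix entries. -/
noncomputable instance : TopologicalSpace SL2C :=
  TopologicalSpace.induced (fun A => (A : Matrix (Fin 2) (Fin 2) ℂ)) inferInstance

/-- `PSL(2,ℂ)`, the quotient of `SL(2,ℂ)` by its center `{±I}`,
equipped with the quotient topology. -/
abbrev PSL2C := SL2C ⧸ Subgroup.center SL2C

/-- The diagonal matrix `diag(a, a⁻¹)` as an element of `SL(2,ℂ)`. -/
noncomputable def dMat (a : ℂ) (h : a ≠ 0) : SL2C :=
  ⟨!![a, 0; 0, a⁻¹], by rw [Matrix.det_fin_two_of]; simp [mul_inv_cancel₀ h]⟩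

/-- The projection `SL(2,ℂ) → PSL(2,ℂ)`. -/
def projMk : SL2C →* PSL2C := QuotientGroup.mk' _

/-- `T ∈ PSL(2,ℂ)` is loxodromic with diagonal parameter `a`: it is conjugate in
`PSL(2,ℂ)` to (the class of) `diag(a, a⁻¹)` with `|a| > 1`.  Its norm is `N(T) = |a|²`. -/
def IsLoxodromicWith (T : PSL2C) (a : ℂ) : Prop :=
  ∃ h : a ≠ 0, 1 < ‖a‖ ∧ IsConj (projMk (dMat a h)) T

/-- `T ∈ PSL(2,ℂ)` is loxodromic. -/
def IsLoxodromic (T : PSL2C) : Prop := ∃ a : ℂ, IsLoxodromicWith T a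

/-- `T ∈ PSL(2,ℂ)` is elliptic: a nonidentity element conjugate to (the class of)
`diag(e^{iφ/2}, e^{-iφ/2})` for some real `φ`. -/
def IsElliptic (T : PSL2C) : Prop :=
  T ≠ 1 ∧ ∃ φ : ℝ,
    IsConj (projMk (dMat (Complex.exp (φ * Complex.I / 2)) (Complex.exp_ne_zero _))) T

/-- `T ∈ PSL(2,ℂ)` is parabolic: a nonidentity element whose trace squared equals `4`. -/
def IsParabolic (T : PSL2C) : Prop :=
  T ≠ 1 ∧ ∃ S : SL2C, projMk S = T ∧ (Matrix.trace (S : Matrix (Fin 2) (Fin 2) ℂ)) ^ 2 = 4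

/-- The conjugate subgroup `α⁻¹ Γ α`. -/
def conjSG (Γ : Subgroup PSL2C) (α : PSL2C) : Subgroup PSL2C :=
  Γ.map (MulAut.conj α⁻¹).toMonoidHom

/-- `α` belongs to the commensurator of `Γ` in `PSL(2,ℂ)`: both indices
`[Γ : Γ ∩ α⁻¹Γα]` and `[α⁻¹Γα : Γ ∩ α⁻¹Γα]` are finite. -/
def InCommensurator (Γ : Subgroup PSL2C) (α : PSL2C) : Prop :=
  (conjSG Γ α).relIndex Γ ≠ 0 ∧ Γ.relIndex (conjSG Γ α) ≠ 0

/-- The double coset `Γ g Γ = {γ₁ g γ₂ : γ₁, γ₂ ∈ Γ}`. -/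
def doubleCoset (Γ : Subgroup PSL2C) (g : PSL2C) : Set PSL2C :=
  {x | ∃ γ₁ ∈ Γ, ∃ γ₂ ∈ Γ, x = γ₁ * g * γ₂}

/-- The centralizer `C_Γ(T) = {σ ∈ Γ : σT = Tσ}` of `T` in `Γ`, as a subgroup. -/
def centIn (Γ : Subgroup PSL2C) (T : PSL2C) : Subgroup PSL2C :=
  Γ ⊓ Subgroup.centralizer {T}

/-- `R` is primitive in `Γ`: there is no `S ∈ Γ` and integer `m ≥ 2` with `Sᵐ = R`. -/
def IsPrimitive (Γ : Subgroup PSL2C) (R : PSL2C) : Prop :=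
  ¬ ∃ S ∈ Γ, ∃ m : ℕ, 2 ≤ m ∧ S ^ m = R

lemma dMat_mul (x y : ℂ) (hx : x ≠ 0) (hy : y ≠ 0) :
    dMat x hx * dMat y hy = dMat (x * y) (mul_ne_zero hx hy) := by
  apply Subtype.ext
  rw [Matrix.SpecialLinearGroup.coe_mul]
  simp [dMat, Matrix.SpecialLinearGroup.coe_mul, Matrix.mul_fin_two, mul_inv, mul_comm]

lemma dMat_one : dMat 1 one_ne_zero = 1 := by
  apply Subtype.ext
  simp [dMat, Matrix.SpecialLinearGroup.coe_one, Matrix.one_fin_two]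

lemma dMat_congr {x y : ℂ} (h : x = y) (hx : x ≠ 0) (hy : y ≠ 0) :
    dMat x hx = dMat y hy := by subst h; rfl

lemma dMat_pow (x : ℂ) (hx : x ≠ 0) (m : ℕ) :
    (dMat x hx) ^ m = dMat (x ^ m) (pow_ne_zero m hx) := by
  induction m with
  | zero =>
      rw [pow_zero]
      symm
      apply Subtype.ext
      simp [dMat, Matrix.one_fin_two]
  | succ n ih =>
      rw [pow_succ, ih, dMat_mul]
      exact dMat_congr rfl _ _

lemma center_cases {z : SL2C} (hz : z ∈ Subgroup.center SL2C) :
    (z : Matrix (Fin 2) (Fin 2) ℂ) = 1 ∨ (z : Matrix (Fin 2) (Fin 2) ℂ) = -1 := by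
  obtain ⟨r, hr, hr'⟩ := Matrix.SpecialLinearGroup.mem_center_iff.mp hz
  simp only [Fintype.card_fin] at hr
  rw [pow_two] at hr
  rcases mul_self_eq_one_iff.mp hr with h1 | h1
  · left; rw [← hr', h1]; simp
  · right; rw [← hr', h1]
    ext i j
    fin_cases i <;> fin_cases j <;>
      simp [Matrix.scalar_apply, Matrix.diagonal, Matrix.one_apply]

/-- Anything commuting with the class of `dMat a` (with `|a| > 1`) is the class
of a diagonal matrix. -/
lemma comm_diag {a : ℂ} (ha0 : a ≠ 0) (ha1 : 1 < ‖a‖) (x : PSL2C)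
    (hx : x * projMk (dMat a ha0) = projMk (dMat a ha0) * x) :
    ∃ b : ℂ, ∃ hb : b ≠ 0, x = projMk (dMat b hb) := by
  obtain ⟨X, rfl⟩ : ∃ X : SL2C, projMk X = x := Quotient.exists_rep x
  rw [← _root_.map_mul projMk] at hx
  obtain ⟨z, hzc, hz⟩ := (QuotientGroup.mk'_eq_mk' _).mp hx
  have hdet : Matrix.det (X : Matrix (Fin 2) (Fin 2) ℂ) = 1 := X.2
  have hM : ((X * dMat a ha0 * z : SL2C) : Matrix (Fin 2) (Fin 2) ℂ)
      = ((dMat a ha0 * X : SL2C) : Matrix (Fin 2) (Fin 2) ℂ) := by rw [hz]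
  simp only [Matrix.SpecialLinearGroup.coe_mul] at hM
  rcases center_cases hzc with h1 | h1
  · rw [h1, mul_one] at hM
    -- entry equations
    have h01 : (X : Matrix (Fin 2) (Fin 2) ℂ) 0 1 * a⁻¹ = a * (X : Matrix (Fin 2) (Fin 2) ℂ) 0 1 := by
      have := congrFun (congrFun hM 0) 1
      simpa [dMat, Matrix.mul_apply, Fin.sum_univ_two] using this
    have h10 : (X : Matrix (Fin 2) (Fin 2) ℂ) 1 0 * a = a⁻¹ * (X : Matrix (Fin 2) (Fin 2) ℂ) 1 0 := by
      have := congrFun (congrFun hM 1) 0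
      simpa [dMat, Matrix.mul_apply, Fin.sum_univ_two] using this
    have haa : a * a ≠ 1 := by
      intro h
      have h2 := congrArg (‖·‖) h
      rw [norm_mul, norm_one] at h2
      nlinarith
    have hX01 : (X : Matrix (Fin 2) (Fin 2) ℂ) 0 1 = 0 := by
      by_contra h
      apply haa
      field_simp at h01
      have h' : (a * a - 1) * ((X : Matrix (Fin 2) (Fin 2) ℂ) 0 1) = 0 := by
        linear_combination -((X : Matrix (Fin 2) (Fin 2) ℂ) 0 1) * h01
      rcases mul_eq_zero.mp h' with h'' | h''
      · linear_combination h''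
      · exact absurd h'' h
    have hX10 : (X : Matrix (Fin 2) (Fin 2) ℂ) 1 0 = 0 := by
      by_contra h
      apply haa
      field_simp at h10
      have h' : (a * a - 1) * ((X : Matrix (Fin 2) (Fin 2) ℂ) 1 0) = 0 := by
        linear_combination ((X : Matrix (Fin 2) (Fin 2) ℂ) 1 0) * h10
      rcases mul_eq_zero.mp h' with h'' | h''
      · linear_combination h''
      · exact absurd h'' h
    rw [Matrix.det_fin_two, hX01, hX10] at hdet
    simp only [mul_zero, zero_mul, sub_zero] at hdet
    have hb : (X : Matrix (Fin 2) (Fin 2) ℂ) 0 0 ≠ 0 := by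
      intro h; rw [h, zero_mul] at hdet; exact one_ne_zero hdet.symm
    have hX11 : (X : Matrix (Fin 2) (Fin 2) ℂ) 1 1 = ((X : Matrix (Fin 2) (Fin 2) ℂ) 0 0)⁻¹ := by
      field_simp
      linear_combination hdet
    refine ⟨(X : Matrix (Fin 2) (Fin 2) ℂ) 0 0, hb, congrArg projMk (Subtype.ext ?_)⟩
    show (X : Matrix (Fin 2) (Fin 2) ℂ) = _
    ext i j
    fin_cases i <;> fin_cases j <;> simp [dMat, hX01, hX10, hX11]
  · exfalso
    rw [h1] at hM
    have h00 : (X : Matrix (Fin 2) (Fin 2) ℂ) 0 0 * a * (-1) = a * (X : Matrix (Fin 2) (Fin 2) ℂ) 0 0 := by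
      have := congrFun (congrFun hM 0) 0
      simpa [dMat, Matrix.mul_apply, Fin.sum_univ_two] using this
    have h11 : (X : Matrix (Fin 2) (Fin 2) ℂ) 1 1 * a⁻¹ * (-1) = a⁻¹ * (X : Matrix (Fin 2) (Fin 2) ℂ) 1 1 := by
      have := congrFun (congrFun hM 1) 1
      simpa [dMat, Matrix.mul_apply, Fin.sum_univ_two] using this
    have h01 : (X : Matrix (Fin 2) (Fin 2) ℂ) 0 1 * a⁻¹ * (-1) = a * (X : Matrix (Fin 2) (Fin 2) ℂ) 0 1 := by
      have := congrFun (congrFun hM 0) 1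
      simpa [dMat, Matrix.mul_apply, Fin.sum_univ_two] using this
    have hX00 : (X : Matrix (Fin 2) (Fin 2) ℂ) 0 0 = 0 := by
      have : 2 * a * (X : Matrix (Fin 2) (Fin 2) ℂ) 0 0 = 0 := by linear_combination -h00
      rcases mul_eq_zero.mp this with h | h
      · rcases mul_eq_zero.mp h with h' | h'
        · norm_num at h'
        · exact absurd h' ha0
      · exact h
    have hX11 : (X : Matrix (Fin 2) (Fin 2) ℂ) 1 1 = 0 := by
      have ha0' : a⁻¹ ≠ 0 := inv_ne_zero ha0
      have : 2 * a⁻¹ * (X : Matrix (Fin 2) (Fin 2) ℂ) 1 1 = 0 := by linear_combination -h11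
      rcases mul_eq_zero.mp this with h | h
      · rcases mul_eq_zero.mp h with h' | h'
        · norm_num at h'
        · exact absurd h' ha0'
      · exact h
    rw [Matrix.det_fin_two, hX00, hX11] at hdet
    simp only [zero_mul, mul_zero, zero_sub] at hdet
    have hX01 : (X : Matrix (Fin 2) (Fin 2) ℂ) 0 1 ≠ 0 := by
      intro h; rw [h, zero_mul] at hdet; norm_num at hdet
    -- from h01 : X01 * a⁻¹ * (-1) = a * X01 with X01 ≠ 0: a * a = -1
    have haa : a * a = -1 := by
      have h' : ((-1) - a * a) * ((X : Matrix (Fin 2) (Fin 2) ℂ) 0 1) = 0 := by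
        field_simp at h01
        linear_combination ((X : Matrix (Fin 2) (Fin 2) ℂ) 0 1) * h01
      rcases mul_eq_zero.mp h' with h | h
      · linear_combination -h
      · exact absurd h hX01
    have h2 := congrArg (‖·‖) haa
    rw [norm_mul] at h2
    simp at h2
    nlinarith

lemma pow_conj' (c x : PSL2C) (m : ℕ) : (c⁻¹ * x * c) ^ m = c⁻¹ * x ^ m * c := by
  induction m with
  | zero => group
  | succ n ih => rw [pow_succ, ih, pow_succ]; group

/-- Let `Γ` be a cocompact Kleinian group, `α ∈ comm(Γ) \ Γ`,
`T ∈ Γα⁻¹Γ`, and let `T₀` be a loxodromic element of `C_Γ(T)` of minimal norm among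
loxodromic elements of `C_Γ(T)`.  Then `T₀` is primitive in `Γ`. -/
theorem stmt_11 (Γ : Subgroup PSL2C)
    (hdisc : DiscreteTopology Γ) (hcpt : CompactSpace (PSL2C ⧸ Γ))
    (α : PSL2C) (hα : InCommensurator Γ α) (hαΓ : α ∉ Γ)
    (T : PSL2C) (hT : T ∈ doubleCoset Γ α⁻¹)
    (T₀ : PSL2C) (hT₀ : T₀ ∈ centIn Γ T)
    (a : ℂ) (ha : IsLoxodromicWith T₀ a)
    (hmin : ∀ S ∈ centIn Γ T, ∀ b : ℂ, IsLoxodromicWith S b →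
      ‖a‖ ^ 2 ≤ ‖b‖ ^ 2) :
    IsPrimitive Γ T₀ := by
  rw [_root_.IsPrimitive]
  rintro ⟨S, hS, m, hm, hSm⟩
  obtain ⟨ha0, ha1, hconj⟩ := ha
  obtain ⟨c, hc⟩ := isConj_iff.mp hconj
  set D := projMk (dMat a ha0) with hD
  have hT0 : D = c⁻¹ * T₀ * c := by
    rw [← hc]; group
  -- T commutes with T₀
  have hTT0 : T * T₀ = T₀ * T :=
    (Subgroup.mem_centralizer_iff.mp hT₀.2) T rfl
  -- S commutes with T₀ = S^m
  have hST0 : S * T₀ = T₀ * S := by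
    rw [← hSm]; exact ((Commute.refl S).pow_right m)
  have conj_comm : ∀ x : PSL2C, x * T₀ = T₀ * x →
      (c⁻¹ * x * c) * D = D * (c⁻¹ * x * c) := by
    intro x h
    have e1 : c⁻¹ * x * c * (c⁻¹ * T₀ * c) = c⁻¹ * (x * T₀) * c := by group
    have e2 : c⁻¹ * T₀ * c * (c⁻¹ * x * c) = c⁻¹ * (T₀ * x) * c := by group
    rw [hT0, e1, e2, h]
  obtain ⟨b, hb, hSb⟩ := comm_diag ha0 ha1 _ (conj_comm S hST0)
  obtain ⟨t, ht, hTt⟩ := comm_diag ha0 ha1 _ (conj_comm T hTT0)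
  -- S commutes with T
  have hST : T * S = S * T := by
    have hdd : (c⁻¹ * T * c) * (c⁻¹ * S * c) = (c⁻¹ * S * c) * (c⁻¹ * T * c) := by
      rw [hSb, hTt, ← _root_.map_mul projMk, ← _root_.map_mul projMk,
        dMat_mul, dMat_mul]
      exact congrArg projMk (dMat_congr (mul_comm t b) _ _)
    have e1 : (c⁻¹ * T * c) * (c⁻¹ * S * c) = c⁻¹ * (T * S) * c := by group
    have e2 : (c⁻¹ * S * c) * (c⁻¹ * T * c) = c⁻¹ * (S * T) * c := by group
    rw [e1, e2] at hdd
    have h' := mul_right_cancel hdd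
    exact mul_left_cancel h'
  have hScent : S ∈ centIn Γ T :=
    ⟨hS, Subgroup.mem_centralizer_iff.mpr (by rintro x rfl; exact hST)⟩
  -- norm relation : |b|^m = |a|
  have hpow : projMk (dMat (b ^ m) (pow_ne_zero m hb)) = projMk (dMat a ha0) := by
    rw [← dMat_pow (hx := hb), _root_.map_pow, ← hSb, pow_conj', hSm, ← hT0]
  obtain ⟨z, hzc, hz⟩ := (QuotientGroup.mk'_eq_mk' _).mp hpow
  have hzM : ((dMat (b ^ m) (pow_ne_zero m hb) * z : SL2C) : Matrix (Fin 2) (Fin 2) ℂ)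
      = ((dMat a ha0 : SL2C) : Matrix (Fin 2) (Fin 2) ℂ) := by rw [hz]
  rw [Matrix.SpecialLinearGroup.coe_mul] at hzM
  have habs : ‖b‖ ^ m = ‖a‖ := by
    rcases center_cases hzc with h1 | h1 <;> rw [h1] at hzM
    · have h00 := congrFun (congrFun hzM 0) 0
      simp [dMat] at h00
      rw [← h00, norm_pow]
    · have h00 := congrFun (congrFun hzM 0) 0
      simp [dMat, Matrix.mul_apply, Fin.sum_univ_two] at h00
      rw [← h00]
      simp [map_pow]
  have hb1 : 1 < ‖b‖ := by
    by_contra h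
    push_neg at h
    have := pow_le_one₀ (norm_nonneg b) h (n := m)
    rw [habs] at this
    linarith
  have hlox : IsLoxodromicWith S b := by
    refine ⟨hb, hb1, isConj_iff.mpr ⟨c, ?_⟩⟩
    rw [← hSb]; group
  have hle := hmin S hScent b hlox
  have h2m : ‖b‖ ^ 2 ≤ ‖b‖ ^ m :=
    pow_le_pow_right₀ (le_of_lt hb1) hm
  rw [habs] at h2m
  nlinarith
end

section
/- Let Γ be a cocompact Kleinian group and let α ∈ comm(Γ) \ Γ. Then there are only finitely many Γ-conjugacy classes of elliptic elements in the double coset Γα⁻¹Γ; that is, the set { {σ⁻¹Rσ : σ ∈ Γ} : R ∈ Γα⁻¹Γ elliptic } is finite. -/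
open Matrix Complex Pointwise

section Aux

open Set Topology

lemma coeSL_injective : Function.Injective (fun A : SL2C => (A : Matrix (Fin 2) (Fin 2) ℂ)) :=
  fun _ _ h => Subtype.ext h

lemma isClosedEmbedding_coeSL :
    Topology.IsClosedEmbedding (fun A : SL2C => (A : Matrix (Fin 2) (Fin 2) ℂ)) := by
  refine ⟨⟨⟨rfl⟩, coeSL_injective⟩, ?_⟩
  have h : Set.range (fun A : SL2C => (A : Matrix (Fin 2) (Fin 2) ℂ))
      = {M : Matrix (Fin 2) (Fin 2) ℂ | M.det = 1} := by
    ext M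
    constructor
    · rintro ⟨A, rfl⟩; exact A.2
    · intro h; exact ⟨⟨M, h⟩, rfl⟩
  rw [h]
  exact isClosed_eq (Continuous.matrix_det continuous_id) continuous_const

lemma continuous_coeSL : Continuous (fun A : SL2C => (A : Matrix (Fin 2) (Fin 2) ℂ)) :=
  isClosedEmbedding_coeSL.continuous

noncomputable instance : IsTopologicalGroup SL2C where
  continuous_mul := by
    apply continuous_induced_rng.2
    have h : ((fun A : SL2C => (A : Matrix (Fin 2) (Fin 2) ℂ)) ∘ fun p : SL2C × SL2C => p.1 * p.2)
        = fun p : SL2C × SL2C => (p.1 : Matrix (Fin 2) (Fin 2) ℂ) * (p.2 : Matrix (Fin 2) (Fin 2) ℂ) := by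
      funext p; simp
    rw [h]
    exact Continuous.matrix_mul (continuous_coeSL.comp continuous_fst)
      (continuous_coeSL.comp continuous_snd)
  continuous_inv := by
    apply continuous_induced_rng.2
    have h : ((fun A : SL2C => (A : Matrix (Fin 2) (Fin 2) ℂ)) ∘ fun A : SL2C => A⁻¹)
        = fun A : SL2C => Matrix.adjugate (A : Matrix (Fin 2) (Fin 2) ℂ) := by
      funext A; exact Matrix.SpecialLinearGroup.coe_inv A
    rw [h]
    exact Continuous.matrix_adjugate continuous_coeSL

noncomputable instance : T2Space SL2C :=
  isClosedEmbedding_coeSL.toIsEmbedding.t2Space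

noncomputable instance : LocallyCompactSpace (Matrix (Fin 2) (Fin 2) ℂ) :=
  inferInstanceAs (LocallyCompactSpace (Fin 2 → Fin 2 → ℂ))

noncomputable instance : LocallyCompactSpace SL2C :=
  isClosedEmbedding_coeSL.locallyCompactSpace

lemma isClosed_centerSL : IsClosed ((Subgroup.center SL2C : Set SL2C)) := by
  have h : (Subgroup.center SL2C : Set SL2C) = ⋂ b : SL2C, {a : SL2C | b * a = a * b} := by
    ext a
    simp only [Set.mem_iInter, Set.mem_setOf_eq, SetLike.mem_coe, Subgroup.mem_center_iff]
  rw [h]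
  exact isClosed_iInter fun b =>
    isClosed_eq (continuous_mul_left b) (continuous_mul_right b)

noncomputable instance : T2Space PSL2C := by
  haveI : IsClosed ((Subgroup.center SL2C : Set SL2C)) := isClosed_centerSL
  infer_instance

lemma exists_compact_cover (Γ : Subgroup PSL2C) (hcpt : CompactSpace (PSL2C ⧸ Γ)) :
    ∃ K : Set PSL2C, IsCompact K ∧ ∀ g : PSL2C, ∃ k ∈ K, k⁻¹ * g ∈ Γ := by
  choose V hVc hVn using fun x : PSL2C => exists_compact_mem_nhds x
  have hopen : ∀ x : PSL2C, IsOpen ((QuotientGroup.mk : PSL2C → PSL2C ⧸ Γ) '' interior (V x)) :=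
    fun x => QuotientGroup.isOpenMap_coe _ isOpen_interior
  have hcover : (Set.univ : Set (PSL2C ⧸ Γ)) ⊆
      ⋃ x : PSL2C, (QuotientGroup.mk : PSL2C → PSL2C ⧸ Γ) '' interior (V x) := by
    rintro y -
    obtain ⟨g, rfl⟩ := QuotientGroup.mk_surjective y
    exact Set.mem_iUnion.2 ⟨g, ⟨g, mem_interior_iff_mem_nhds.2 (hVn g), rfl⟩⟩
  obtain ⟨t, ht⟩ := isCompact_univ.elim_finite_subcover _ hopen hcover
  refine ⟨⋃ x ∈ t, V x, t.finite_toSet.isCompact_biUnion (fun x _ => hVc x), ?_⟩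
  intro g
  obtain ⟨x, hxt, hgs⟩ := Set.mem_iUnion₂.1 (ht (Set.mem_univ (QuotientGroup.mk g)))
  obtain ⟨k, hk, hkg⟩ := hgs
  exact ⟨k, Set.mem_biUnion hxt (interior_subset hk), QuotientGroup.eq.1 hkg⟩

noncomputable def Ucirc : Set PSL2C :=
  (fun φ : ℝ => projMk (dMat (Complex.exp (φ * Complex.I / 2)) (Complex.exp_ne_zero _))) ''
    (Set.Icc 0 (4 * Real.pi))

lemma continuous_dExp :
    Continuous (fun φ : ℝ => dMat (Complex.exp (φ * Complex.I / 2)) (Complex.exp_ne_zero _)) := by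
  apply continuous_induced_rng.2
  have he : Continuous fun φ : ℝ => Complex.exp ((φ : ℂ) * Complex.I / 2) :=
    Complex.continuous_exp.comp ((Complex.continuous_ofReal.mul continuous_const).div_const 2)
  have h : ((fun A : SL2C => (A : Matrix (Fin 2) (Fin 2) ℂ)) ∘
      fun φ : ℝ => dMat (Complex.exp (φ * Complex.I / 2)) (Complex.exp_ne_zero _))
      = fun φ : ℝ => !![Complex.exp ((φ:ℂ) * Complex.I / 2), 0; 0,
          (Complex.exp ((φ:ℂ) * Complex.I / 2))⁻¹] := by
    funext φ; rfl
  rw [h]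
  apply continuous_matrix
  intro i j
  fin_cases i <;> fin_cases j <;>
    simp only [Matrix.cons_val', Matrix.cons_val_zero, Matrix.cons_val_one, Matrix.head_cons,
      Matrix.empty_val', Matrix.cons_val_fin_one, Matrix.head_fin_const, Matrix.of_apply,
      Fin.isValue]
  · exact he
  · exact continuous_const
  · exact continuous_const
  · exact he.inv₀ (fun φ => Complex.exp_ne_zero _)

lemma isCompact_Ucirc : IsCompact Ucirc :=
  isCompact_Icc.image (QuotientGroup.continuous_mk.comp continuous_dExp)

lemma elliptic_conj_mem (T : PSL2C) (hT : IsElliptic T) :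
    ∃ u ∈ Ucirc, ∃ c : PSL2C, c * u * c⁻¹ = T := by
  obtain ⟨-, φ, hconj⟩ := hT
  have hπ : (0:ℝ) < 4 * Real.pi := by positivity
  set n : ℤ := ⌊φ / (4 * Real.pi)⌋ with hn
  set φ' : ℝ := φ - (n : ℝ) * (4 * Real.pi) with hφ'
  have h1 : φ' ∈ Set.Icc 0 (4 * Real.pi) :=
    ⟨Int.sub_floor_div_mul_nonneg φ hπ, le_of_lt (Int.sub_floor_div_mul_lt φ hπ)⟩
  have h2 : Complex.exp ((φ' : ℂ) * Complex.I / 2) = Complex.exp ((φ : ℂ) * Complex.I / 2) := by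
    have harg : ((φ' : ℝ) : ℂ) * Complex.I / 2
        = (φ : ℂ) * Complex.I / 2 + (-n : ℤ) * (2 * Real.pi * Complex.I) := by
      rw [hφ']
      push_cast
      ring
    rw [harg, Complex.exp_add, Complex.exp_int_mul_two_pi_mul_I, mul_one]
  have h3 : dMat (Complex.exp ((φ' : ℂ) * Complex.I / 2)) (Complex.exp_ne_zero _)
      = dMat (Complex.exp ((φ : ℂ) * Complex.I / 2)) (Complex.exp_ne_zero _) := by
    apply Subtype.ext
    simp only [dMat, h2]
  obtain ⟨c, hc⟩ := isConj_iff.1 hconj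
  exact ⟨projMk (dMat (Complex.exp ((φ' : ℂ) * Complex.I / 2)) (Complex.exp_ne_zero _)),
    ⟨φ', h1, rfl⟩, c, by rw [h3]; exact hc⟩

lemma classOf_conj_eq (Γ : Subgroup PSL2C) (R σ₀ : PSL2C) (hσ₀ : σ₀ ∈ Γ) :
    {x : PSL2C | ∃ σ ∈ Γ, x = σ⁻¹ * R * σ}
      = {x : PSL2C | ∃ σ ∈ Γ, x = σ⁻¹ * (σ₀⁻¹ * R * σ₀) * σ} := by
  ext x
  constructor
  · rintro ⟨σ, hσ, rfl⟩
    exact ⟨σ₀⁻¹ * σ, Γ.mul_mem (Γ.inv_mem hσ₀) hσ, by group⟩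
  · rintro ⟨σ, hσ, rfl⟩
    exact ⟨σ₀ * σ, Γ.mul_mem hσ₀ hσ, by group⟩

lemma coset_inter_finite (Γ : Subgroup PSL2C) (hdisc : DiscreteTopology Γ) (g : PSL2C)
    {C : Set PSL2C} (hC : IsCompact C) :
    ({x : PSL2C | ∃ γ ∈ Γ, x = g * γ} ∩ C).Finite := by
  have hclosed : IsClosed (Γ : Set PSL2C) := Subgroup.isClosed_of_discrete
  have hT : IsCompact ((fun x => g⁻¹ * x) '' C) := hC.image (continuous_mul_left g⁻¹)
  have hdisc' : DiscreteTopology ((Γ : Set PSL2C) ∩ ((fun x => g⁻¹ * x) '' C) : Set PSL2C) :=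
    DiscreteTopology.of_subset hdisc Set.inter_subset_left
  have hfin : ((Γ : Set PSL2C) ∩ ((fun x => g⁻¹ * x) '' C)).Finite :=
    (hT.inter_left hclosed).finite (isDiscrete_iff_discreteTopology.2 hdisc')
  refine (hfin.image (fun y => g * y)).subset ?_
  rintro x ⟨⟨γ, hγ, rfl⟩, hxC⟩
  exact ⟨γ, ⟨hγ, ⟨g * γ, hxC, by group⟩⟩, rfl⟩

lemma doubleCoset_subset_finite_cosets (Γ : Subgroup PSL2C) (α : PSL2C)
    (h : (conjSG Γ α).relIndex Γ ≠ 0) :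
    ∃ (ι : Type) (_ : Finite ι) (r : ι → PSL2C),
      doubleCoset Γ α⁻¹ ⊆ ⋃ i : ι, {x : PSL2C | ∃ γ ∈ Γ, x = (r i * α⁻¹) * γ} := by
  set S : Subgroup Γ := (conjSG Γ α).subgroupOf Γ with hS
  haveI : S.FiniteIndex := ⟨h⟩
  refine ⟨Γ ⧸ S, inferInstance, fun c => ((Quotient.out c : Γ) : PSL2C), ?_⟩
  rintro x ⟨γ₁, h₁, γ₂, h₂, rfl⟩
  set g₁ : Γ := ⟨γ₁, h₁⟩ with hg₁
  set c : Γ ⧸ S := QuotientGroup.mk g₁ with hc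
  have hmem : (Quotient.out c)⁻¹ * g₁ ∈ S :=
    QuotientGroup.eq.1 (QuotientGroup.out_eq' c)
  have hmem' : ((((Quotient.out c)⁻¹ * g₁ : Γ)) : PSL2C) ∈ conjSG Γ α :=
    Subgroup.mem_subgroupOf.1 hmem
  obtain ⟨g, hg, hg2⟩ := Subgroup.mem_map.1 hmem'
  have hg2' : α⁻¹ * g * α = ((Quotient.out c : Γ) : PSL2C)⁻¹ * γ₁ := by
    simpa [MulAut.conj_apply] using hg2
  have hγ₁ : γ₁ = ((Quotient.out c : Γ) : PSL2C) * (α⁻¹ * g * α) := by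
    rw [hg2']; group
  refine Set.mem_iUnion.2 ⟨c, ⟨g * γ₂, Γ.mul_mem hg h₂, ?_⟩⟩
  rw [hγ₁]; group

end Aux

/-- Let `Γ` be a cocompact Kleinian group and `α ∈ comm(Γ) \ Γ`.
There are only finitely many `Γ`-conjugacy classes of elliptic elements in the double
coset `Γα⁻¹Γ`. -/
theorem stmt_12 (Γ : Subgroup PSL2C)
    (hdisc : DiscreteTopology Γ) (hcpt : CompactSpace (PSL2C ⧸ Γ))
    (α : PSL2C) (hα : InCommensurator Γ α) (hαΓ : α ∉ Γ) :
    {C : Set PSL2C | ∃ R ∈ doubleCoset Γ α⁻¹, IsElliptic R ∧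
      C = {x | ∃ σ ∈ Γ, x = σ⁻¹ * R * σ}}.Finite := by
  classical
  obtain ⟨K, hK, hKcover⟩ := exists_compact_cover Γ hcpt
  set Ccpt : Set PSL2C := (fun p : PSL2C × PSL2C => p.1⁻¹ * p.2 * p.1) '' (K ×ˢ Ucirc) with hCc
  have hCcpt : IsCompact Ccpt := (hK.prod isCompact_Ucirc).image
    (((continuous_fst.inv).mul continuous_snd).mul continuous_fst)
  obtain ⟨ι, hι, r, hsub⟩ := doubleCoset_subset_finite_cosets Γ α hα.1
  haveI := hι
  have hDC : (doubleCoset Γ α⁻¹ ∩ Ccpt).Finite := by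
    refine (Set.finite_iUnion
      (fun i : ι => coset_inter_finite Γ hdisc (r i * α⁻¹) hCcpt)).subset ?_
    rintro x ⟨hxD, hxC⟩
    obtain ⟨i, hi⟩ := Set.mem_iUnion.1 (hsub hxD)
    exact Set.mem_iUnion.2 ⟨i, hi, hxC⟩
  refine (hDC.image (fun y => {x : PSL2C | ∃ σ ∈ Γ, x = σ⁻¹ * y * σ})).subset ?_
  rintro C ⟨R, hRD, hRell, rfl⟩
  obtain ⟨u, huU, c, hc⟩ := elliptic_conj_mem R hRell
  obtain ⟨k, hkK, hkγ⟩ := hKcover c⁻¹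
  set γ : PSL2C := k⁻¹ * c⁻¹ with hγdef
  have hγ : γ ∈ Γ := hkγ
  have hcval : c = γ⁻¹ * k⁻¹ := by rw [hγdef]; group
  refine ⟨γ * R * γ⁻¹, ⟨?_, ?_⟩, ?_⟩
  · obtain ⟨γ₁, h₁, γ₂, h₂, rfl⟩ := hRD
    exact ⟨γ * γ₁, Γ.mul_mem hγ h₁, γ₂ * γ⁻¹, Γ.mul_mem h₂ (Γ.inv_mem hγ), by group⟩
  · refine ⟨(k, u), ⟨hkK, huU⟩, ?_⟩
    rw [← hc, hcval]
    group
  · have h := classOf_conj_eq Γ R γ⁻¹ (Γ.inv_mem hγ)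
    rw [inv_inv] at h
    exact h.symm
end
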